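/- Fix 1 < τ* ≤ τ_d and define f : (1, τ_d) → ℝ by f(r) = (ln τ_d − ln τ*)/√(τ_d − r) for r < τ* and f(r) = (ln τ_d − ln r)/√(τ_d − r) for r ≥ τ*. Then f attains its unique maximum on (1, τ_d) at r = τ* (when τ* < τ_d; if τ* = τ_d the supremum is approached as r → τ_d). -/

import Mathlib

open Filter

private lemma g_anti (τ τd : ℝ) (h1 : 1 < τ) (hlt : τ < τd) :
    StrictAntiOn (fun r => (Real.log τd - Real.log r) / Real.sqrt (τd - r))
      (Set.Ico τ τd) := by
  apply strictAntiOn_of_deriv_neg (convex_Ico _ _)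
  · apply ContinuousOn.div
    · exact continuousOn_const.sub (Real.continuousOn_log.mono (by
        intro x hx; simp only [Set.mem_compl_iff, Set.mem_singleton_iff]
        have : (1:ℝ) < x := lt_of_lt_of_le h1 hx.1
        linarith ))
    · exact (Real.continuous_sqrt.comp (continuous_const.sub continuous_id)).continuousOn
    · intro x hx
      have : 0 < τd - x := by simp at hx; linarith [hx.2]
      positivity
  · intro x hx
    rw [interior_Ico] at hx
    have hx0 : (0:ℝ) < x := by linarith [hx.1]
    have hxd : x < τd := hx.2
    have hv : (0:ℝ) < τd - x := by linarith
    set s := Real.sqrt (τd - x) with hs_def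
    have hs : 0 < s := Real.sqrt_pos.2 hv
    have hsq : s ^ 2 = τd - x := Real.sq_sqrt hv.le
    have hd1 : HasDerivAt (fun r : ℝ => Real.log τd - Real.log r) (-x⁻¹) x :=
      (Real.hasDerivAt_log hx0.ne').const_sub (Real.log τd)
    have hd2 : HasDerivAt (fun r : ℝ => Real.sqrt (τd - r)) (1 / (2 * s) * (-1)) x := by
      have h := (Real.hasDerivAt_sqrt hv.ne').comp x ((hasDerivAt_id x).const_sub τd)
      simpa [Function.comp_def] using h
    have hd3 := hd1.div hd2 hs.ne'
    rw [show (fun r => (Real.log τd - Real.log r) / Real.sqrt (τd - r)) = ((fun r => Real.log τd - Real.log r) / fun r => Real.sqrt (τd - r)) from rfl, hd3.deriv]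
    apply div_neg_of_neg_of_pos _ (pow_pos hs 2)
    have hτd0 : (0:ℝ) < τd := by linarith
    set L := Real.log τd - Real.log x with hL_def
    have hLx : L * x < 2 * (τd - x) := by
      have h5 : L ≤ (τd - x) / x := by
        calc L = Real.log (τd / x) := (Real.log_div (by positivity) hx0.ne').symm
          _ ≤ τd / x - 1 := Real.log_le_sub_one_of_pos (by positivity)
          _ = (τd - x) / x := by field_simp
      have h6 : L * x ≤ τd - x := by
        have := (le_div_iff₀ hx0).1 h5; linarith
      linarith
    have h4 : L * (1 / (2 * s)) < x⁻¹ * s := by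
      rw [mul_one_div, div_lt_iff₀ (by positivity), inv_mul_eq_div, div_mul_eq_mul_div,
        lt_div_iff₀ hx0]
      nlinarith
    nlinarith

theorem stmt12 (τ τd : ℝ) (h1 : 1 < τ) (hττd : τ ≤ τd)
    (f : ℝ → ℝ)
    (hf : ∀ r, f r = if r < τ then (Real.log τd - Real.log τ) / Real.sqrt (τd - r)
                     else (Real.log τd - Real.log r) / Real.sqrt (τd - r)) :
    (τ < τd → ∀ r ∈ Set.Ioo (1 : ℝ) τd, r ≠ τ → f r < f τ) ∧
    (τ = τd → Tendsto f (nhdsWithin τd (Set.Ioo (1 : ℝ) τd))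
        (nhds (⨆ r ∈ Set.Ioo (1 : ℝ) τd, f r))) := by
  constructor
  · intro hlt r hr hne
    have hτ0 : (0:ℝ) < τ := by linarith
    have hL : 0 < Real.log τd - Real.log τ :=
      sub_pos.2 (Real.log_lt_log hτ0 hlt)
    have hfτ : f τ = (Real.log τd - Real.log τ) / Real.sqrt (τd - τ) := by
      rw [hf]; simp
    rcases lt_or_gt_of_ne hne with h | h
    · rw [hf, if_pos h, hfτ]
      apply div_lt_div_of_pos_left hL (Real.sqrt_pos.2 (by linarith))
      exact Real.sqrt_lt_sqrt (by linarith) (by linarith)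
    · have := g_anti τ τd h1 hlt ⟨le_refl τ, hlt⟩ ⟨h.le, hr.2⟩ h
      rw [hf, if_neg (not_lt.2 h.le), hfτ]
      exact this
  · intro heq
    subst heq
    have hf0 : ∀ r ∈ Set.Ioo (1:ℝ) τ, f r = 0 := by
      intro r hr
      rw [hf, if_pos hr.2, sub_self, zero_div]
    have hsup : (⨆ r ∈ Set.Ioo (1:ℝ) τ, f r) = 0 := by
      have h0 : ∀ r : ℝ, (⨆ _ : r ∈ Set.Ioo (1:ℝ) τ, f r) = 0 := by
        intro r
        by_cases h : r ∈ Set.Ioo (1:ℝ) τ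
        · rw [ciSup_pos h]; exact hf0 r h
        · haveI : IsEmpty (r ∈ Set.Ioo (1:ℝ) τ) := isEmpty_Prop.mpr h
          exact Real.iSup_of_isEmpty _
      calc (⨆ r ∈ Set.Ioo (1:ℝ) τ, f r) = ⨆ _ : ℝ, (0:ℝ) := iSup_congr h0
        _ = 0 := ciSup_const
    rw [hsup]
    refine Tendsto.congr' ?_ tendsto_const_nhds
    exact eventually_nhdsWithin_of_forall (fun x hx => (hf0 x hx).symm)
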